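/- arXiv:2406.04315 — 2 statements merged into one kernel-verified Lean document; each statement's English description precedes it below -/
import Mathlib

section
/- Consider the Hamiltonian H(x,u,ξ,μ) = |ξ + J_μ x/2|²/2 on ℝ^{d₁}×ℝ^{d₂}×ℝ^{d₁}×ℝ^{d₂}, where J_μ is skew-symmetric for each μ and linear in μ, and μ·[x,x'] = ⟨J_μ x, x'⟩. Then the solution of Hamilton's equations ẋ = ∇_ξ H, u̇ = ∇_μ H, ξ̇ = -∇_x H, μ̇ = -∇_u H with initial condition (x,u,ξ,μ)(0) = (0,0,ξ₀,μ₀) satisfies: μ(t) = μ₀, x(t) = ((exp(tJ_{μ₀}) - I)/J_{μ₀}) ξ₀, ξ(t) = (1/2)(I + exp(tJ_{μ₀})) ξ₀, and u(t) = (1/2)∫₀ᵗ [((exp(τJ_{μ₀})-I)/J_{μ₀}) ξ₀, exp(τJ_{μ₀}) ξ₀] dτ. -/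
open Matrix Function

/-- The entire matrix function `(exp (t A) - I)/A = ∑_{k ≥ 1} t^k A^(k-1)/k!`,
well defined even for singular `A`. -/
noncomputable def expmOneDiv {n : ℕ} (t : ℝ) (A : Matrix (Fin n) (Fin n) ℝ) :
    Matrix (Fin n) (Fin n) ℝ :=
  ∑' k : ℕ, (t ^ (k + 1) / (k + 1).factorial : ℝ) • A ^ k

/-- The matrix exponential `exp (t A)`, via its power series. -/
noncomputable def matExp {n : ℕ} (t : ℝ) (A : Matrix (Fin n) (Fin n) ℝ) :
    Matrix (Fin n) (Fin n) ℝ :=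
  ∑' k : ℕ, (t ^ k / k.factorial : ℝ) • A ^ k

/-- The second-layer bracket `[x, y] ∈ ℝ^{d₂}` determined by the linear family of
matrices `J`, via `μ · [x, y] = ⟨J μ x, y⟩`, i.e. `[x,y]ⱼ = ⟨J eⱼ x, y⟩`. -/
noncomputable def bracket {d₁ d₂ : ℕ} (J : (Fin d₂ → ℝ) →ₗ[ℝ] Matrix (Fin d₁) (Fin d₁) ℝ)
    (x y : Fin d₁ → ℝ) : Fin d₂ → ℝ :=
  fun j => (J (Pi.single j 1)).mulVec x ⬝ᵥ y

/-- The Hamiltonian `𝒜(x, u, ξ, μ) = |ξ + J_μ x / 2|² / 2` (half the principal symbol of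
the sub-Laplacian); it is independent of `u`, but `u` is kept as a formal argument. -/
noncomputable def quadHam {d₁ d₂ : ℕ} (J : (Fin d₂ → ℝ) →ₗ[ℝ] Matrix (Fin d₁) (Fin d₁) ℝ)
    (x : Fin d₁ → ℝ) (_u : Fin d₂ → ℝ) (ξ : Fin d₁ → ℝ) (μ : Fin d₂ → ℝ) : ℝ :=
  (1 / 2 : ℝ) * ((ξ + (1 / 2 : ℝ) • (J μ).mulVec x) ⬝ᵥ (ξ + (1 / 2 : ℝ) • (J μ).mulVec x))

set_option synthInstance.maxHeartbeats 1000000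
set_option maxHeartbeats 1000000
set_option linter.unusedSectionVars false

namespace St8Aux

open NormedSpace

/-! ### Matrices as continuous linear maps -/

variable {n : ℕ}

noncomputable def toCLM (n : ℕ) :
    Matrix (Fin n) (Fin n) ℝ ≃L[ℝ] ((Fin n → ℝ) →L[ℝ] (Fin n → ℝ)) :=
  (Matrix.toLin' ≪≫ₗ LinearMap.toContinuousLinearMap).toContinuousLinearEquiv

lemma toCLM_apply (M : Matrix (Fin n) (Fin n) ℝ) (v : Fin n → ℝ) :
    toCLM n M v = M.mulVec v := by
  show (LinearMap.toContinuousLinearMap (Matrix.toLin' M)) v = M.mulVec v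
  rw [LinearMap.coe_toContinuousLinearMap', Matrix.toLin'_apply]

lemma toCLM_mul (M N : Matrix (Fin n) (Fin n) ℝ) :
    toCLM n (M * N) = toCLM n M * toCLM n N := by
  ext v
  simp [ContinuousLinearMap.mul_apply, toCLM_apply, Matrix.mulVec_mulVec]

lemma toCLM_one : toCLM n (1 : Matrix (Fin n) (Fin n) ℝ) = 1 := by
  ext v
  simp [toCLM_apply, Matrix.one_mulVec, ContinuousLinearMap.one_apply]

lemma toCLM_pow (M : Matrix (Fin n) (Fin n) ℝ) (k : ℕ) :
    toCLM n (M ^ k) = toCLM n M ^ k := by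
  induction k with
  | zero => simpa using toCLM_one
  | succ k ih => rw [pow_succ, pow_succ, toCLM_mul, ih]

/-! ### Generalities on `exp` of continuous linear maps -/

variable {E : Type*} [NormedAddCommGroup E] [NormedSpace ℝ E] [CompleteSpace E]

omit [CompleteSpace E] in
lemma opNorm_pow_le (X : E →L[ℝ] E) (k : ℕ) : ‖X ^ k‖ ≤ ‖X‖ ^ k := by
  induction k with
  | zero => rw [pow_zero, pow_zero]; exact ContinuousLinearMap.norm_id_le
  | succ k ih =>
      calc ‖X ^ (k + 1)‖ = ‖X ^ k * X‖ := by rw [pow_succ]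
        _ ≤ ‖X ^ k‖ * ‖X‖ := norm_mul_le _ _
        _ ≤ ‖X‖ ^ k * ‖X‖ := mul_le_mul_of_nonneg_right ih (norm_nonneg X)
        _ = ‖X‖ ^ (k + 1) := (pow_succ _ _).symm

lemma expTerm_summable (X : E →L[ℝ] E) (t : ℝ) (z : E) :
    Summable (fun k : ℕ => (t ^ k / k.factorial : ℝ) • (X ^ k) z) := by
  refine Summable.of_norm_bounded (g := fun k => (|t| * ‖X‖) ^ k / k.factorial * ‖z‖)
    ((Real.summable_pow_div_factorial (|t| * ‖X‖)).mul_right _) (fun k => ?_)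
  have h1 : ‖(X ^ k) z‖ ≤ ‖X‖ ^ k * ‖z‖ :=
    le_trans ((X ^ k).le_opNorm z)
      (mul_le_mul_of_nonneg_right (opNorm_pow_le X k) (norm_nonneg z))
  calc ‖(t ^ k / k.factorial : ℝ) • (X ^ k) z‖
      = |t| ^ k / k.factorial * ‖(X ^ k) z‖ := by
        rw [norm_smul, Real.norm_eq_abs, abs_div, abs_pow, Nat.abs_cast]
    _ ≤ |t| ^ k / k.factorial * (‖X‖ ^ k * ‖z‖) :=
        mul_le_mul_of_nonneg_left h1 (by positivity)
    _ = (|t| * ‖X‖) ^ k / k.factorial * ‖z‖ := by rw [mul_pow]; ring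

lemma exp_smul_apply (X : E →L[ℝ] E) (t : ℝ) (z : E) :
    exp (t • X) z = ∑' k : ℕ, (t ^ k / k.factorial : ℝ) • (X ^ k) z := by
  have hexp : exp (t • X) = ∑' k : ℕ, ((k.factorial : ℝ)⁻¹) • (t • X) ^ k := by
    rw [exp_eq_tsum ℝ]
  have h := (ContinuousLinearMap.apply ℝ E z).map_tsum
    (expSeries_summable' (𝕂 := ℝ) (t • X))
  simp only [ContinuousLinearMap.apply_apply] at h
  rw [hexp, h]
  refine tsum_congr fun k => ?_
  simp only [ContinuousLinearMap.apply_apply, ContinuousLinearMap.smul_apply, smul_pow,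
    smul_smul]
  congr 1
  rw [div_eq_mul_inv, mul_comm]

/-! ### The block operator trick -/

noncomputable def Bop (L : E →L[ℝ] E) : (E × E) →L[ℝ] (E × E) :=
  ((L.comp (ContinuousLinearMap.fst ℝ E E)) + ContinuousLinearMap.snd ℝ E E).prod 0

lemma Bop_apply (L : E →L[ℝ] E) (p : E × E) : Bop L p = (L p.1 + p.2, 0) := rfl

lemma Bop_pow_succ (L : E →L[ℝ] E) (k : ℕ) (p : E × E) :
    ((Bop L) ^ (k + 1)) p = ((L ^ (k + 1)) p.1 + (L ^ k) p.2, 0) := by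
  induction k generalizing p with
  | zero => simp [Bop_apply, pow_one, pow_zero, ContinuousLinearMap.one_apply]
  | succ k ih =>
      have h1 : ((Bop L) ^ (k + 2)) p = ((Bop L) ^ (k + 1)) (Bop L p) := by
        rw [pow_succ, ContinuousLinearMap.mul_apply]
      rw [h1, ih (Bop L p), Bop_apply]
      have h2 : (L ^ (k + 1)) (L p.1) = (L ^ (k + 2)) p.1 := by
        rw [← ContinuousLinearMap.mul_apply, ← pow_succ]
      simp [map_add, map_zero, h2]

omit [CompleteSpace E] in
lemma tsum_prod_mk {f g : ℕ → E} (hf : Summable f) (hg : Summable g) :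
    ∑' k, ((f k, g k) : E × E) = (∑' k, f k, ∑' k, g k) :=
  (hf.hasSum.prodMk hg.hasSum).tsum_eq

noncomputable def Gv (L : E →L[ℝ] E) (t : ℝ) (w : E) : E :=
  ∑' k : ℕ, (t ^ (k + 1) / (k + 1).factorial : ℝ) • (L ^ k) w

lemma exp_Bop_snd (L : E →L[ℝ] E) (t : ℝ) (w : E) :
    exp (t • Bop L) (0, w) = (Gv L t w, w) := by
  rw [exp_smul_apply]
  have hsum := expTerm_summable (Bop L) t ((0 : E), w)
  have h1 : ((∑' k : ℕ, (t ^ k / k.factorial : ℝ) • ((Bop L) ^ k) (0, w)) : E × E).1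
      = Gv L t w := by
    have h := (ContinuousLinearMap.fst ℝ E E).map_tsum hsum
    simp only [ContinuousLinearMap.coe_fst'] at h
    rw [h]
    have hs2 : Summable fun k : ℕ =>
        ((t ^ k / k.factorial : ℝ) • ((Bop L) ^ k) ((0 : E), w)).1 := by
      simpa [Function.comp_def] using hsum.map (ContinuousLinearMap.fst ℝ E E)
        (ContinuousLinearMap.fst ℝ E E).continuous
    rw [Summable.tsum_eq_zero_add hs2]
    simp only [ContinuousLinearMap.coe_fst', pow_zero, Nat.factorial_zero]
    have : ∀ k : ℕ, ((t ^ (k+1) / (k+1).factorial : ℝ) • ((Bop L) ^ (k+1)) (0, w)).1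
        = (t ^ (k+1) / (k+1).factorial : ℝ) • (L ^ k) w := by
      intro k
      rw [Bop_pow_succ]
      simp
    simp only [this]
    simp [Gv]
  have h2 : ((∑' k : ℕ, (t ^ k / k.factorial : ℝ) • ((Bop L) ^ k) (0, w)) : E × E).2 = w := by
    have h := (ContinuousLinearMap.snd ℝ E E).map_tsum hsum
    simp only [ContinuousLinearMap.coe_snd'] at h
    rw [h]
    have hs2 : Summable fun k : ℕ =>
        ((t ^ k / k.factorial : ℝ) • ((Bop L) ^ k) ((0 : E), w)).2 := by
      simpa [Function.comp_def] using hsum.map (ContinuousLinearMap.snd ℝ E E)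
        (ContinuousLinearMap.snd ℝ E E).continuous
    rw [Summable.tsum_eq_zero_add hs2]
    have : ∀ k : ℕ, ((t ^ (k+1) / (k+1).factorial : ℝ) • ((Bop L) ^ (k+1)) (0, w)).2 = 0 := by
      intro k
      rw [Bop_pow_succ]
      simp
    simp only [ContinuousLinearMap.coe_snd', this]
    simp
  exact Prod.ext h1 h2

lemma exp_Bop_fst (L : E →L[ℝ] E) (t : ℝ) (z : E) :
    exp (t • Bop L) (z, 0) = (exp (t • L) z, 0) := by
  have hBk : ∀ k : ℕ, ((Bop L) ^ k) ((z, 0) : E × E) = ((L ^ k) z, 0) := by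
    intro k
    cases k with
    | zero => simp [ContinuousLinearMap.one_apply]
    | succ k => rw [Bop_pow_succ]; simp
  rw [exp_smul_apply, exp_smul_apply]
  simp only [hBk, Prod.smul_mk, smul_zero]
  rw [tsum_prod_mk (expTerm_summable L t z) summable_zero, tsum_zero]

lemma Gv_zero (L : E →L[ℝ] E) (w : E) : Gv L 0 w = 0 := by
  simp [Gv]

lemma Gv_hasDerivAt (L : E →L[ℝ] E) (w : E) (t : ℝ) :
    HasDerivAt (fun s => Gv L s w) (exp (t • L) w) t := by
  have h2 : HasDerivAt (fun s : ℝ => exp (s • Bop L)) (exp (t • Bop L) * Bop L) t :=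
    hasDerivAt_exp_smul_const (Bop L) t
  have h3 := h2.clm_apply (hasDerivAt_const t ((0 : E), w))
  have h4 := (hasDerivAt_const (𝕜 := ℝ) t (ContinuousLinearMap.fst ℝ E E)).clm_apply h3
  have hfun : (fun s : ℝ => (ContinuousLinearMap.fst ℝ E E) (exp (s • Bop L) ((0 : E), w)))
      = fun s => Gv L s w := by
    funext s
    show (exp (s • Bop L) ((0 : E), w)).1 = Gv L s w
    rw [exp_Bop_snd]
  rw [hfun] at h4
  have hB0 : (Bop L) ((0 : E), w) = (w, (0 : E)) := by rw [Bop_apply]; simp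
  simp only [ContinuousLinearMap.zero_apply, map_zero, add_zero, zero_add,
    ContinuousLinearMap.mul_apply, hB0, exp_Bop_fst, ContinuousLinearMap.coe_fst'] at h4
  exact h4

lemma L_apply_Gv (L : E →L[ℝ] E) (t : ℝ) (w : E) :
    L (Gv L t w) + w = exp (t • L) w := by
  have hcomm : Bop L * exp (t • Bop L) = exp (t • Bop L) * Bop L :=
    (((Commute.refl (Bop L)).smul_right t).exp_right)
  have h1 : (Bop L) (exp (t • Bop L) ((0 : E), w)) = (exp (t • L) w, 0) := by
    rw [← ContinuousLinearMap.mul_apply, hcomm, ContinuousLinearMap.mul_apply,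
      show (Bop L) ((0 : E), w) = (w, (0 : E)) by rw [Bop_apply]; simp]
    exact exp_Bop_fst L t w
  rw [exp_Bop_snd, Bop_apply] at h1
  exact congrArg Prod.fst h1

lemma expv_hasDerivAt (L : E →L[ℝ] E) (w : E) (t : ℝ) :
    HasDerivAt (fun s => exp (s • L) w) ((exp (t • L)) (L w)) t := by
  have h4 := (hasDerivAt_exp_smul_const L t).clm_apply (hasDerivAt_const t w)
  simpa [ContinuousLinearMap.mul_apply] using h4

lemma exp_neg_cancel (L : E →L[ℝ] E) (t : ℝ) (v : E) :
    exp (t • L) (exp ((-t) • L) v) = v := by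
  rw [← ContinuousLinearMap.mul_apply,
    ← NormedSpace.exp_add_of_commute_of_mem_ball (𝕂 := ℝ) (((Commute.refl L).smul_left t).smul_right (-t))
      ((expSeries_radius_eq_top ℝ (E →L[ℝ] E)).symm ▸ edist_lt_top _ _)
      ((expSeries_radius_eq_top ℝ (E →L[ℝ] E)).symm ▸ edist_lt_top _ _),
    ← add_smul, add_neg_cancel, zero_smul, exp_zero, ContinuousLinearMap.one_apply]

/-! ### Bridges between matrix series and operator exponentials -/

lemma matExp0 {n : ℕ} (t : ℝ) (A : Matrix (Fin n) (Fin n) ℝ) :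
    matExp t A = ∑' k : ℕ, (t ^ k / (k).factorial : ℝ) • A ^ k := rfl

lemma matExp_toCLM (t : ℝ) (A : Matrix (Fin n) (Fin n) ℝ) :
    toCLM n (matExp t A) = exp (t • toCLM n A) := by
  have hexp : exp (t • toCLM n A)
      = ∑' k : ℕ, ((k.factorial : ℝ)⁻¹) • (t • toCLM n A) ^ k := by rw [exp_eq_tsum ℝ]
  rw [matExp, ContinuousLinearEquiv.map_tsum, hexp]
  refine tsum_congr fun k => ?_
  rw [_root_.map_smul, toCLM_pow, smul_pow, smul_smul]
  congr 1
  rw [div_eq_mul_inv, mul_comm]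

lemma matExp_mulVec (t : ℝ) (A : Matrix (Fin n) (Fin n) ℝ) (w : Fin n → ℝ) :
    (matExp t A).mulVec w = exp (t • toCLM n A) w := by
  rw [← toCLM_apply, matExp_toCLM]

lemma Gseries_summable (L : E →L[ℝ] E) (t : ℝ) :
    Summable (fun k : ℕ => (t ^ (k + 1) / (k + 1).factorial : ℝ) • L ^ k) := by
  refine Summable.of_norm_bounded (g := fun k => |t| * ((|t| * ‖L‖) ^ k / k.factorial))
    ((Real.summable_pow_div_factorial (|t| * ‖L‖)).mul_left _) (fun k => ?_)
  calc ‖(t ^ (k + 1) / (k + 1).factorial : ℝ) • L ^ k‖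
      = |t| ^ (k + 1) / (k + 1).factorial * ‖L ^ k‖ := by
        rw [norm_smul (t ^ (k + 1) / ((k + 1).factorial : ℝ)) (L ^ k), Real.norm_eq_abs,
          abs_div, abs_pow, Nat.abs_cast]
    _ ≤ |t| ^ (k + 1) / (k + 1).factorial * ‖L‖ ^ k :=
        mul_le_mul_of_nonneg_left (opNorm_pow_le L k) (by positivity)
    _ ≤ |t| ^ (k + 1) / k.factorial * ‖L‖ ^ k := by
        gcongr
        omega
    _ = |t| * ((|t| * ‖L‖) ^ k / k.factorial) := by rw [mul_pow, pow_succ]; ring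

lemma expmOneDiv_toCLM (t : ℝ) (A : Matrix (Fin n) (Fin n) ℝ) :
    toCLM n (expmOneDiv t A)
      = ∑' k : ℕ, (t ^ (k + 1) / (k + 1).factorial : ℝ) • (toCLM n A) ^ k := by
  rw [expmOneDiv, ContinuousLinearEquiv.map_tsum]
  exact tsum_congr fun k => by rw [_root_.map_smul, toCLM_pow]

lemma expmOneDiv_mulVec (t : ℝ) (A : Matrix (Fin n) (Fin n) ℝ) (w : Fin n → ℝ) :
    (expmOneDiv t A).mulVec w = Gv (toCLM n A) t w := by
  rw [← toCLM_apply, expmOneDiv_toCLM]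
  have h := (ContinuousLinearMap.apply ℝ (Fin n → ℝ) w).map_tsum
    (Gseries_summable (toCLM n A) t)
  simp only [ContinuousLinearMap.apply_apply] at h
  rw [h, Gv]
  exact tsum_congr fun k => by rw [ContinuousLinearMap.smul_apply]

/-! ### Elementary calculus helpers -/

lemma dot_hasDerivAt {m : ℕ} (w : ℝ → Fin m → ℝ) (w' : Fin m → ℝ) (a : ℝ)
    (h : ∀ l, HasDerivAt (fun s => w s l) (w' l) a) :
    HasDerivAt (fun s => (1 / 2 : ℝ) * (w s ⬝ᵥ w s)) (w a ⬝ᵥ w') a := by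
  have h1 : HasDerivAt (fun s => w s ⬝ᵥ w s)
      (∑ l, (w' l * w a l + w a l * w' l)) a := by
    simp only [dotProduct]
    exact HasDerivAt.fun_sum fun l _ => (h l).mul (h l)
  have h2 := h1.const_mul (1 / 2 : ℝ)
  have key : w a ⬝ᵥ w' = 1 / 2 * ∑ l, (w' l * w a l + w a l * w' l) := by
    simp only [dotProduct]
    rw [Finset.sum_add_distrib,
      Finset.sum_congr rfl fun l _ => mul_comm (w' l) (w a l)]
    ring
  rw [key]
  exact h2

lemma eq_const_of_hasDerivAt_zero (f : ℝ → ℝ) (hf : ∀ s, HasDerivAt f 0 s) (t : ℝ) :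
    f t = f 0 :=
  is_const_of_deriv_eq_zero (fun s => (hf s).differentiableAt) (fun s => (hf s).deriv) t 0

end St8Aux

open St8Aux

/-- Consider the Hamiltonian `𝒜(x,u,ξ,μ) = |ξ + J_μ x/2|²/2` on
`ℝ^{d₁} × ℝ^{d₂} × ℝ^{d₁} × ℝ^{d₂}`, where `J μ` is skew-symmetric and linear in `μ`,
and `μ · [x,x'] = ⟨J_μ x, x'⟩`.  Any solution `(x, u, ξ, μ)` of Hamilton's equations
`ẋ = ∇_ξ 𝒜`, `u̇ = ∇_μ 𝒜`, `ξ̇ = -∇_x 𝒜`, `μ̇ = -∇_u 𝒜` (written coordinatewise via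
partial derivatives) with initial condition `(0, 0, ξ₀, μ₀)` satisfies
`μ(t) = μ₀`, `x(t) = ((exp(tJ_{μ₀}) - I)/J_{μ₀}) ξ₀`,
`ξ(t) = ½ (I + exp(tJ_{μ₀})) ξ₀`, and
`u(t) = ½ ∫₀ᵗ [((exp(τJ_{μ₀}) - I)/J_{μ₀}) ξ₀, exp(τJ_{μ₀}) ξ₀] dτ`. -/
theorem statement8 {d₁ d₂ : ℕ}
    (J : (Fin d₂ → ℝ) →ₗ[ℝ] Matrix (Fin d₁) (Fin d₁) ℝ)
    (hskew : ∀ μ, (J μ)ᵀ = -(J μ))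
    (x : ℝ → Fin d₁ → ℝ) (u : ℝ → Fin d₂ → ℝ)
    (ξ : ℝ → Fin d₁ → ℝ) (μ : ℝ → Fin d₂ → ℝ)
    (ξ₀ : Fin d₁ → ℝ) (μ₀ : Fin d₂ → ℝ)
    (hx0 : x 0 = 0) (hu0 : u 0 = 0) (hξ0 : ξ 0 = ξ₀) (hμ0 : μ 0 = μ₀)
    (hHamx : ∀ (t : ℝ) (i : Fin d₁), HasDerivAt (fun s => x s i)
      (deriv (fun a => quadHam J (x t) (u t) (update (ξ t) i a) (μ t)) (ξ t i)) t)
    (hHamu : ∀ (t : ℝ) (j : Fin d₂), HasDerivAt (fun s => u s j)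
      (deriv (fun a => quadHam J (x t) (u t) (ξ t) (update (μ t) j a)) (μ t j)) t)
    (hHamξ : ∀ (t : ℝ) (i : Fin d₁), HasDerivAt (fun s => ξ s i)
      (-(deriv (fun a => quadHam J (update (x t) i a) (u t) (ξ t) (μ t)) (x t i))) t)
    (hHamμ : ∀ (t : ℝ) (j : Fin d₂), HasDerivAt (fun s => μ s j)
      (-(deriv (fun a => quadHam J (x t) (update (u t) j a) (ξ t) (μ t)) (u t j))) t) :
    ∀ t : ℝ,
      μ t = μ₀ ∧
      x t = (expmOneDiv t (J μ₀)).mulVec ξ₀ ∧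
      ξ t = (1 / 2 : ℝ) • ((1 + matExp t (J μ₀)).mulVec ξ₀) ∧
      u t = (1 / 2 : ℝ) • ∫ τ in (0:ℝ)..t,
        bracket J ((expmOneDiv τ (J μ₀)).mulVec ξ₀) ((matExp τ (J μ₀)).mulVec ξ₀) := by
  -- μ is constant
  have hμ' : ∀ (t : ℝ) (j : Fin d₂), HasDerivAt (fun s => μ s j) 0 t := by
    intro t j
    have h0 := hHamμ t j
    have hconst : (fun a => quadHam J (x t) (update (u t) j a) (ξ t) (μ t))
        = fun _ => quadHam J (x t) 0 (ξ t) (μ t) := rfl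
    rw [hconst, deriv_const, neg_zero] at h0
    exact h0
  have hμc : ∀ t, μ t = μ₀ := by
    intro t
    funext j
    have h := eq_const_of_hasDerivAt_zero (fun s => μ s j) (fun s => hμ' s j) t
    rw [h, hμ0]
  set A : Matrix (Fin d₁) (Fin d₁) ℝ := J μ₀ with hA
  set L : (Fin d₁ → ℝ) →L[ℝ] (Fin d₁ → ℝ) := toCLM d₁ A with hL
  set Z : ℝ → Fin d₁ → ℝ := fun s => ξ s + (1 / 2 : ℝ) • A.mulVec (x s) with hZdef
  -- derivative of x
  have hDx : ∀ (t : ℝ) (i : Fin d₁), HasDerivAt (fun s => x s i) (Z t i) t := by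
    intro t i
    have h0 := hHamx t i
    rw [hμc t] at h0
    have hD : HasDerivAt (fun a => quadHam J (x t) (u t) (update (ξ t) i a) μ₀)
        ((update (ξ t) i (ξ t i) + (1 / 2 : ℝ) • A.mulVec (x t)) ⬝ᵥ Pi.single i 1)
        (ξ t i) := by
      apply dot_hasDerivAt (w := fun a => update (ξ t) i a + (1 / 2 : ℝ) • A.mulVec (x t))
      intro l
      by_cases hl : l = i
      · subst hl
        simp only [Pi.add_apply, update_self, Pi.single_eq_same]
        exact (hasDerivAt_id _).add_const _
      · simp only [Pi.add_apply, update_of_ne hl, Pi.single_eq_of_ne hl]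
        exact hasDerivAt_const _ _
    rw [hD.deriv] at h0
    have hval : (update (ξ t) i (ξ t i) + (1 / 2 : ℝ) • A.mulVec (x t)) ⬝ᵥ Pi.single i 1
        = Z t i := by
      simp [hZdef, update_eq_self]
    rw [hval] at h0
    exact h0
  -- derivative of ξ
  have hDξ : ∀ (t : ℝ) (i : Fin d₁), HasDerivAt (fun s => ξ s i)
      ((1 / 2 : ℝ) * A.mulVec (Z t) i) t := by
    intro t i
    have h0 := hHamξ t i
    rw [hμc t] at h0
    have hD : HasDerivAt (fun a => quadHam J (update (x t) i a) (u t) (ξ t) μ₀)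
        ((ξ t + (1 / 2 : ℝ) • A.mulVec (update (x t) i (x t i)))
          ⬝ᵥ fun l => (1 / 2 : ℝ) * A l i) (x t i) := by
      apply dot_hasDerivAt
        (w := fun a => ξ t + (1 / 2 : ℝ) • A.mulVec (update (x t) i a))
      intro l
      simp only [Pi.add_apply, Pi.smul_apply, smul_eq_mul, Matrix.mulVec, dotProduct]
      have h1 : ∀ m ∈ Finset.univ, HasDerivAt (fun a => A l m * update (x t) i a m)
          (if m = i then A l m else 0) (x t i) := by
        intro m _
        by_cases hm : m = i
        · have heq : (fun a : ℝ => A l m * update (x t) i a m) = fun a => A l m * a := by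
            funext a; rw [hm, update_self]
          rw [heq, if_pos hm]
          simpa using (hasDerivAt_id (x t i)).const_mul (A l m)
        · simp only [update_of_ne hm, if_neg hm]
          exact hasDerivAt_const _ _
      have h2 := (HasDerivAt.fun_sum h1).const_mul (1 / 2 : ℝ)
      have h3 := h2.const_add (ξ t l)
      simpa [Finset.sum_ite_eq'] using h3
    rw [hD.deriv] at h0
    have hval : -((ξ t + (1 / 2 : ℝ) • A.mulVec (update (x t) i (x t i)))
          ⬝ᵥ fun l => (1 / 2 : ℝ) * A l i)
        = (1 / 2 : ℝ) * A.mulVec (Z t) i := by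
      rw [update_eq_self]
      have hZt : Z t = ξ t + (1 / 2 : ℝ) • A.mulVec (x t) := rfl
      rw [hZt]
      simp only [dotProduct, Matrix.mulVec, Finset.mul_sum, ← Finset.sum_neg_distrib]
      refine Finset.sum_congr rfl fun l _ => ?_
      have hAli : A l i = -A i l := by
        have := congrFun (congrFun (hskew μ₀) i) l
        simpa [Matrix.transpose_apply, Matrix.neg_apply] using this
      rw [hAli]
      ring
    rw [hval] at h0
    exact h0
  -- derivative of u
  have hDu : ∀ (t : ℝ) (j : Fin d₂), HasDerivAt (fun s => u s j)
      ((1 / 2 : ℝ) * bracket J (x t) (Z t) j) t := by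
    intro t j
    have h0 := hHamu t j
    rw [hμc t] at h0
    set K : Fin d₁ → ℝ := (J (Pi.single j 1)).mulVec (x t) with hK
    have hupd : ∀ a : ℝ, update μ₀ j a = μ₀ + (a - μ₀ j) • (Pi.single j 1 : Fin d₂ → ℝ) := by
      intro a
      funext k
      by_cases hk : k = j
      · subst hk; simp
      · simp [update_of_ne hk, Pi.single_eq_of_ne hk]
    have hD : HasDerivAt (fun a => quadHam J (x t) (u t) (ξ t) (update μ₀ j a))
        ((ξ t + (1 / 2 : ℝ) • (J (update μ₀ j (μ₀ j))).mulVec (x t))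
          ⬝ᵥ fun l => (1 / 2 : ℝ) * K l) (μ₀ j) := by
      apply dot_hasDerivAt
        (w := fun a => ξ t + (1 / 2 : ℝ) • (J (update μ₀ j a)).mulVec (x t))
      intro l
      have hwl : (fun a => (ξ t + (1 / 2 : ℝ) • (J (update μ₀ j a)).mulVec (x t)) l)
          = fun a => (ξ t l + (1 / 2 : ℝ) * ((J μ₀).mulVec (x t) l))
              + (1 / 2 : ℝ) * K l * (a - μ₀ j) := by
        funext a
        rw [hupd a]
        simp only [map_add, _root_.map_smul, Matrix.add_mulVec, Matrix.smul_mulVec,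
          Pi.add_apply, Pi.smul_apply, smul_eq_mul, hK]
        ring
      rw [hwl]
      have : HasDerivAt (fun a : ℝ => (1 / 2 : ℝ) * K l * (a - μ₀ j))
          ((1 / 2 : ℝ) * K l) (μ₀ j) := by
        simpa using ((hasDerivAt_id (μ₀ j)).sub_const (μ₀ j)).const_mul ((1 / 2 : ℝ) * K l)
      exact this.const_add _
    rw [hD.deriv] at h0
    have hval : (ξ t + (1 / 2 : ℝ) • (J (update μ₀ j (μ₀ j))).mulVec (x t))
          ⬝ᵥ (fun l => (1 / 2 : ℝ) * K l)
        = (1 / 2 : ℝ) * bracket J (x t) (Z t) j := by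
      rw [update_eq_self]
      have hZt : Z t = ξ t + (1 / 2 : ℝ) • A.mulVec (x t) := rfl
      rw [bracket, hZt]
      simp only [dotProduct, Finset.mul_sum, hK, hA]
      refine Finset.sum_congr rfl fun l _ => ?_
      ring
    rw [hval] at h0
    exact h0
  -- derivative of Z
  have hDZ : ∀ (t : ℝ) (i : Fin d₁), HasDerivAt (fun s => Z s i) (A.mulVec (Z t) i) t := by
    intro t i
    have hcoord : (fun s => Z s i)
        = fun s => ξ s i + (1 / 2 : ℝ) * ∑ m, A i m * x s m := by
      funext s
      simp [hZdef, Matrix.mulVec, dotProduct]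
    rw [hcoord]
    have h1 := (HasDerivAt.fun_sum (fun m (_ : m ∈ Finset.univ) =>
      (hDx t m).const_mul (A i m))).const_mul (1 / 2 : ℝ)
    have h2 := (hDξ t i).add h1
    have hval : (1 / 2 : ℝ) * A.mulVec (Z t) i
        + (1 / 2 : ℝ) * ∑ m, A i m * Z t m = A.mulVec (Z t) i := by
      have : ∑ m, A i m * Z t m = A.mulVec (Z t) i := by
        simp [Matrix.mulVec, dotProduct]
      rw [this]; ring
    rw [hval] at h2
    exact h2
  have hZvec : ∀ t : ℝ, HasDerivAt Z (A.mulVec (Z t)) t := by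
    intro t
    exact hasDerivAt_pi.2 fun i => hDZ t i
  -- Z t = exp (t L) ξ₀
  have hZ0 : Z 0 = ξ₀ := by
    simp [hZdef, hx0, hξ0, Matrix.mulVec_zero]
  have hconstZ : ∀ t : ℝ, NormedSpace.exp ((-t) • L) (Z t) = ξ₀ := by
    have hder : ∀ t : ℝ, HasDerivAt (fun s => NormedSpace.exp ((-s) • L) (Z s)) 0 t := by
      intro t
      have hc : HasDerivAt (fun s : ℝ => NormedSpace.exp ((-s) • L))
          ((-1 : ℝ) • (NormedSpace.exp ((-t) • L) * L)) t := by
        have hg := hasDerivAt_exp_smul_const L (-t)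
        have hf : HasDerivAt (fun s : ℝ => -s) (-1) t := by
          simpa using (hasDerivAt_id t).fun_neg
        exact HasDerivAt.scomp t hg hf
      have hAp := hc.clm_apply (hZvec t)
      have hLZ : A.mulVec (Z t) = L (Z t) := (toCLM_apply A (Z t)).symm
      rw [hLZ] at hAp
      have : ((-1 : ℝ) • (NormedSpace.exp ((-t) • L) * L)) (Z t)
          + NormedSpace.exp ((-t) • L) (L (Z t)) = 0 := by
        simp [ContinuousLinearMap.mul_apply]
      rwa [this] at hAp
    intro t
    funext i
    have h := eq_const_of_hasDerivAt_zero
      (fun s => NormedSpace.exp ((-s) • L) (Z s) i)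
      (fun s => hasDerivAt_pi.1 (hder s) i) t
    rw [h]
    simp [hZ0, NormedSpace.exp_zero, ContinuousLinearMap.one_apply]
  have hZ : ∀ t : ℝ, Z t = NormedSpace.exp (t • L) ξ₀ := by
    intro t
    have := congrArg (⇑(NormedSpace.exp (t • L))) (hconstZ t)
    rwa [exp_neg_cancel] at this
  -- x t = Gv L t ξ₀
  have hx : ∀ t : ℝ, x t = Gv L t ξ₀ := by
    intro t
    funext i
    have h1 : ∀ s : ℝ, HasDerivAt (fun r => x r i - Gv L r ξ₀ i) 0 s := by
      intro s
      have ha := hDx s i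
      rw [show Z s i = NormedSpace.exp (s • L) ξ₀ i from by rw [hZ s]] at ha
      have hb := hasDerivAt_pi.1 (Gv_hasDerivAt L ξ₀ s) i
      simpa using ha.fun_sub hb
    have h := eq_const_of_hasDerivAt_zero _ h1 t
    have h0 : x 0 i - Gv L 0 ξ₀ i = 0 := by
      simp [hx0, Gv_zero]
    rw [h0] at h
    linarith [h]
  -- the key identity for L (Gv ...)
  have hLG : ∀ τ : ℝ, L (Gv L τ ξ₀) = NormedSpace.exp (τ • L) ξ₀ - ξ₀ := by
    intro τ
    exact eq_sub_of_add_eq (L_apply_Gv L τ ξ₀)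
  -- continuity facts
  have cG : Continuous fun τ : ℝ => Gv L τ ξ₀ :=
    continuous_iff_continuousAt.2 fun τ => (Gv_hasDerivAt L ξ₀ τ).continuousAt
  have cE : Continuous fun τ : ℝ => NormedSpace.exp (τ • L) ξ₀ :=
    continuous_iff_continuousAt.2 fun τ => (expv_hasDerivAt L ξ₀ τ).continuousAt
  set ψ : ℝ → Fin d₂ → ℝ :=
    fun τ => bracket J (Gv L τ ξ₀) (NormedSpace.exp (τ • L) ξ₀) with hψ
  have hψeq : (fun τ => bracket J ((expmOneDiv τ A).mulVec ξ₀) ((matExp τ A).mulVec ξ₀))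
      = ψ := by
    funext τ
    rw [hψ, expmOneDiv_mulVec, matExp_mulVec]
  have hcont : ∀ j, Continuous fun τ => ψ τ j := by
    intro j
    have hrw : (fun τ => ψ τ j) = fun τ =>
        ∑ l, (∑ m, J (Pi.single j 1) l m * Gv L τ ξ₀ m)
          * NormedSpace.exp (τ • L) ξ₀ l := by
      funext τ
      simp [hψ, bracket, Matrix.mulVec, dotProduct]
    rw [hrw]
    refine continuous_finset_sum _ fun l _ => Continuous.mul
      (continuous_finset_sum _ fun m _ =>
        Continuous.mul continuous_const ((continuous_apply m).comp cG))
      ((continuous_apply l).comp cE)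
  have hcontψ : Continuous ψ := continuous_pi hcont
  intro t
  refine ⟨hμc t, ?_, ?_, ?_⟩
  · rw [expmOneDiv_mulVec]
    exact hx t
  · -- the ξ component
    have hxi : ξ t = Z t - (1 / 2 : ℝ) • A.mulVec (x t) := by
      have hzz : Z t = ξ t + (1 / 2 : ℝ) • A.mulVec (x t) := rfl
      rw [hzz]
      abel
    have htarget : (1 + matExp t A).mulVec ξ₀ = ξ₀ + NormedSpace.exp (t • L) ξ₀ := by
      rw [Matrix.add_mulVec, Matrix.one_mulVec, matExp_mulVec]
    have hAx : A.mulVec (x t) = NormedSpace.exp (t • L) ξ₀ - ξ₀ := by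
      rw [hx t, ← toCLM_apply]
      exact hLG t
    rw [hxi, hZ t, hAx, htarget]
    module
  · -- the u component
    rw [hψeq]
    funext j
    have hFj : ∀ s : ℝ, HasDerivAt (fun r => ∫ τ in (0:ℝ)..r, ψ τ j) (ψ s j) s := by
      intro s
      exact intervalIntegral.integral_hasDerivAt_right
        ((hcont j).intervalIntegrable (μ := MeasureTheory.volume) _ _)
        ((hcont j).stronglyMeasurableAtFilter MeasureTheory.volume _)
        (hcont j).continuousAt
    have hu' : ∀ s : ℝ, HasDerivAt (fun r => u r j) ((1 / 2 : ℝ) * ψ s j) s := by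
      intro s
      have h := hDu s j
      rw [hx s] at h
      rw [show Z s = NormedSpace.exp (s • L) ξ₀ from hZ s] at h
      exact h
    have hdiff : ∀ s : ℝ, HasDerivAt
        (fun r => u r j - (1 / 2 : ℝ) * ∫ τ in (0:ℝ)..r, ψ τ j) 0 s := by
      intro s
      simpa using (hu' s).fun_sub ((hFj s).const_mul (1 / 2 : ℝ))
    have h := eq_const_of_hasDerivAt_zero _ hdiff t
    rw [intervalIntegral.integral_same] at h
    have hu0j : u 0 j = 0 := by rw [hu0]; rfl
    rw [hu0j] at h
    have hInt : (∫ τ in (0:ℝ)..t, ψ τ) j = ∫ τ in (0:ℝ)..t, ψ τ j := by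
      have hproj := (ContinuousLinearMap.proj (R := ℝ) (φ := fun _ : Fin d₂ => ℝ) j
        ).intervalIntegral_comp_comm (hcontψ.intervalIntegrable (μ := MeasureTheory.volume) 0 t)
      simpa [ContinuousLinearMap.proj_apply] using hproj.symm
    rw [Pi.smul_apply, hInt, smul_eq_mul]
    linarith [h]
end

section
/- Let J be a real skew-symmetric d₁×d₁ matrix with |J| := (-J²)^{1/2}, let ξ ∈ ℝ^{d₁} with ξ ≠ 0 and ξ̄ := ξ/|ξ|, and let θ ∈ ℝ. Define Φ₀ := exp(θJ) exp(-iθ|J|)(I + iθ(|J| + iJ) ξ̄ ξ̄ᵀ). Then det Φ₀ = exp(-iθ tr|J|)(1 + iθ⟨|J|ξ̄, ξ̄⟩), and in particular Φ₀ is invertible (since ⟨|J|ξ̄,ξ̄⟩ ≥ 0 is real). -/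
open Matrix

/-- The exponential of a complex matrix, via its power series. -/
noncomputable def matExpC {n : ℕ} (A : Matrix (Fin n) (Fin n) ℂ) : Matrix (Fin n) (Fin n) ℂ :=
  ∑' k : ℕ, ((k.factorial : ℂ))⁻¹ • A ^ k


open NormedSpace in
lemma matExpC_eq_exp {n : ℕ} (A : Matrix (Fin n) (Fin n) ℂ) : matExpC A = exp A := by
  simp only [matExpC, exp_eq_tsum (𝕂 := ℂ)]

open NormedSpace in
lemma det_exp_smul_hermitian {n : ℕ} {A : Matrix (Fin n) (Fin n) ℂ} (hA : A.IsHermitian)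
    (c : ℂ) : (exp (c • A)).det = Complex.exp (c * A.trace) := by
  have hspec := hA.spectral_theorem
  simp only [Unitary.conjStarAlgAut_apply, Unitary.coe_star] at hspec
  set U : Matrix (Fin n) (Fin n) ℂ := (hA.eigenvectorUnitary : Matrix (Fin n) (Fin n) ℂ) with hUdef
  have hUmem := hA.eigenvectorUnitary.2
  have hU1 : U * star U = 1 := (Matrix.mem_unitaryGroup_iff).mp hUmem
  have hUinv : U⁻¹ = star U := Matrix.inv_eq_right_inv hU1
  have hUunit : IsUnit U := by
    apply Matrix.isUnit_iff_isUnit_det _ |>.mpr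
    exact IsUnit.of_mul_eq_one _ (by rw [← det_mul, hU1, det_one])
  set lam := hA.eigenvalues
  have h1 : c • A = U * Matrix.diagonal (c • (RCLike.ofReal ∘ lam)) * U⁻¹ := by
    rw [hUinv, hspec, diagonal_smul, mul_smul_comm, smul_mul_assoc]
  have h2 : (exp (c • A)) = U * Matrix.diagonal (exp (c • (RCLike.ofReal ∘ lam))) * U⁻¹ := by
    rw [h1, Matrix.exp_conj _ _ hUunit, Matrix.exp_diagonal]
  have h3 : exp (c • (RCLike.ofReal ∘ lam)) = fun i => Complex.exp (c * (lam i : ℂ)) := by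
    rw [Pi.exp_def]
    funext i
    rw [← Complex.exp_eq_exp_ℂ]
    rfl
  have htr : A.trace = ∑ i, (lam i : ℂ) := by
    rw [hspec, Matrix.trace_mul_cycle, ← hUinv,
      Matrix.nonsing_inv_mul _ ((Matrix.isUnit_iff_isUnit_det _).mp hUunit), one_mul,
      Matrix.trace_diagonal]
    rfl
  rw [h2, Matrix.det_conj hUunit, det_diagonal, h3, ← Complex.exp_sum, htr, Finset.mul_sum]

/-- Let `J` be a real skew-symmetric `d₁ × d₁` matrix with
`|J| = K` the positive semidefinite square root of `-J²`, let `ξ ∈ ℝ^{d₁}` be nonzero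
with `ξ̄ = ξ/|ξ|` (Euclidean normalisation) and `θ ∈ ℝ`.  With
`Φ₀ = exp(θJ) exp(-iθ|J|) (I + iθ (|J| + iJ) ξ̄ ξ̄ᵀ)` one has
`det Φ₀ = exp(-iθ tr |J|) (1 + iθ ⟨|J|ξ̄, ξ̄⟩)`; in particular `Φ₀` is invertible. -/
theorem statement10 {d₁ : ℕ} (J K : Matrix (Fin d₁) (Fin d₁) ℝ)
    (hJ : Jᵀ = -J) (hK : K.PosSemidef) (hK2 : K * K = -(J * J))
    (ξ : Fin d₁ → ℝ) (hξ : ξ ≠ 0) (θ : ℝ) :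
    let ξb : Fin d₁ → ℝ := (Real.sqrt (ξ ⬝ᵥ ξ))⁻¹ • ξ
    let Jc : Matrix (Fin d₁) (Fin d₁) ℂ := J.map (fun a => (a : ℂ))
    let Kc : Matrix (Fin d₁) (Fin d₁) ℂ := K.map (fun a => (a : ℂ))
    let ξbc : Fin d₁ → ℂ := fun i => (ξb i : ℂ)
    let Φ₀ : Matrix (Fin d₁) (Fin d₁) ℂ :=
      matExpC ((θ : ℂ) • Jc) * matExpC (-((Complex.I * (θ : ℂ)) • Kc)) *
        (1 + (Complex.I * (θ : ℂ)) • vecMulVec ((Kc + Complex.I • Jc).mulVec ξbc) ξbc)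
    Φ₀.det = Complex.exp (-(Complex.I * (θ : ℂ) * (K.trace : ℝ))) *
        (1 + Complex.I * (θ : ℂ) * ((K.mulVec ξb ⬝ᵥ ξb : ℝ) : ℂ)) ∧
      IsUnit Φ₀ := by
  intro ξb Jc Kc ξbc Φ₀
  -- skewness over ℂ
  have hJc : Jcᵀ = -Jc := by
    ext i j
    have := congrFun (congrFun hJ i) j
    simp only [transpose_apply, Matrix.neg_apply] at this ⊢
    simp [Jc, Matrix.map_apply, this]
  -- Hermitian matrices
  have hIJ : (Complex.I • Jc).IsHermitian := by
    rw [Matrix.IsHermitian, conjTranspose_smul]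
    have : Jcᴴ = Jcᵀ := by
      ext i j; simp [conjTranspose_apply, Jc, Matrix.map_apply, Complex.conj_ofReal]
    rw [this, hJc]
    simp
  have hKc : Kc.IsHermitian := by
    rw [Matrix.IsHermitian]
    ext i j
    have := congrFun (congrFun hK.1.symm i) j
    simp only [conjTranspose_apply] at this ⊢
    have h2 : K j i = K i j := by simpa using this.symm
    simp [Kc, Matrix.map_apply, Complex.conj_ofReal, h2]
  -- traces
  have htrJ : Jc.trace = 0 := by
    have h0 : J.trace = 0 := by
      have := Matrix.trace_transpose J
      rw [hJ, Matrix.trace_neg] at this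
      linarith
    simp only [Matrix.trace, Matrix.diag, Jc, Matrix.map_apply]
    rw [← Complex.ofReal_sum]
    exact_mod_cast congrArg (Complex.ofReal) h0
  have htrK : Kc.trace = (K.trace : ℂ) := by
    simp only [Matrix.trace, Matrix.diag, Kc, Matrix.map_apply]
    push_cast
    ring
  -- first determinant
  have hdet1 : (matExpC ((θ : ℂ) • Jc)).det = 1 := by
    have hs : (θ : ℂ) • Jc = (-(Complex.I * (θ:ℂ))) • (Complex.I • Jc) := by
      rw [smul_smul]
      congr 1
      have : Complex.I * Complex.I = -1 := Complex.I_mul_I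
      ring_nf
      rw [Complex.I_sq]
      ring
    rw [matExpC_eq_exp, hs, det_exp_smul_hermitian hIJ, Matrix.trace_smul, smul_eq_mul, htrJ]
    simp
  -- second determinant
  have hdet2 : (matExpC (-((Complex.I * (θ : ℂ)) • Kc))).det
      = Complex.exp (-(Complex.I * (θ : ℂ) * (K.trace : ℝ))) := by
    rw [matExpC_eq_exp, ← neg_smul, det_exp_smul_hermitian hKc, htrK]
    ring_nf
  -- the rank-one factor
  have hJzero : ξbc ⬝ᵥ (Jc *ᵥ ξbc) = 0 := by
    have h2 : ξbc ᵥ* Jc = -(Jc *ᵥ ξbc) := by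
      rw [← Matrix.mulVec_transpose, hJc, Matrix.neg_mulVec]
    have h1 : ξbc ⬝ᵥ (Jc *ᵥ ξbc) = -(ξbc ⬝ᵥ (Jc *ᵥ ξbc)) :=
      calc ξbc ⬝ᵥ (Jc *ᵥ ξbc) = (ξbc ᵥ* Jc) ⬝ᵥ ξbc := Matrix.dotProduct_mulVec _ _ _
        _ = -((Jc *ᵥ ξbc) ⬝ᵥ ξbc) := by rw [h2, neg_dotProduct]
        _ = -(ξbc ⬝ᵥ (Jc *ᵥ ξbc)) := by rw [dotProduct_comm]
    linear_combination (1/2 : ℂ) * h1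
  have hKdot : ξbc ⬝ᵥ (Kc *ᵥ ξbc) = ((K.mulVec ξb ⬝ᵥ ξb : ℝ) : ℂ) := by
    rw [dotProduct_comm]
    simp only [dotProduct, mulVec, Kc, ξbc, Matrix.map_apply]
    push_cast
    ring
  have hdet3 : (1 + (Complex.I * (θ : ℂ)) • vecMulVec ((Kc + Complex.I • Jc).mulVec ξbc) ξbc).det
      = 1 + Complex.I * (θ : ℂ) * ((K.mulVec ξb ⬝ᵥ ξb : ℝ) : ℂ) := by
    have hv : (Complex.I * (θ : ℂ)) • vecMulVec ((Kc + Complex.I • Jc).mulVec ξbc) ξbc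
        = replicateCol (Fin 1) ((Complex.I * (θ : ℂ)) • ((Kc + Complex.I • Jc).mulVec ξbc)) * replicateRow (Fin 1) ξbc := by
      erw [← Matrix.vecMulVec_eq (Fin 1)]
      ext i j
      simp [vecMulVec_apply, smul_eq_mul]
      ring
    rw [hv]; erw [Matrix.det_one_add_replicateCol_mul_replicateRow (ι := Fin 1)]
    congr 1
    rw [dotProduct_smul, smul_eq_mul]
    simp only [Matrix.add_mulVec, Matrix.smul_mulVec, dotProduct_add, dotProduct_smul,
      smul_eq_mul, hJzero, hKdot]
    ring
  have hΦdet : Φ₀.det = Complex.exp (-(Complex.I * (θ : ℂ) * (K.trace : ℝ))) *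
      (1 + Complex.I * (θ : ℂ) * ((K.mulVec ξb ⬝ᵥ ξb : ℝ) : ℂ)) := by
    simp only [Φ₀]
    rw [det_mul, det_mul, hdet1, hdet2, hdet3, one_mul]
  refine ⟨hΦdet, ?_⟩
  · rw [Matrix.isUnit_iff_isUnit_det, hΦdet]
    apply IsUnit.mul
    · exact (Complex.exp_ne_zero _).isUnit
    · rw [isUnit_iff_ne_zero]
      intro h
      have := congrArg Complex.re h
      simp [Complex.add_re, Complex.mul_re] at this
end
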